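/- Let (Ω, 𝒜, ℙ) be a probability space, G = (G¹, G², G³, G⁴) : Ω → ℝ⁴ a random vector, b ≥ 0, σ_f, σ_d, δ ≥ 0 with κ̄ = E[exp(|G³| + b|G⁴|)] < ∞ and E[(1+|G|)·exp(|G³| + b|G⁴|)] < ∞. Let v : ℝ⁴ → ℝ be measurable satisfying the local Lipschitz property with parameters (A, B, C, D, b), i.e. |v(x,u,y,w) − v(x',u',y',w')| ≤ (A|x−x'| + B|u−u'| + C|y−y'| + D|w−w'|) e^{max(|y|,|y'|) + b·max(|w|,|w'|)}, and assume the integrals defining P v(x,u,y,w) = E[v(x + σ_f δ u + G¹, u + G², y − σ_d δ w + G³, w + G⁴)] exist. Let h : ℝ² → ℝ satisfy |h(x,y) − h(x',y')| ≤ e^{max(|y|,|y'|)}(α|x−x'| + γ|y−y'|) with α, γ ≥ 0. Then the function V(x,u,y,w) := max( h(x,y), P v(x,u,y,w) ) satisfies the local Lipschitz property with parameters ( max(α, A κ̄), (B + A σ_f δ) κ̄, max(γ, C κ̄), (D + C σ_d δ) κ̄, b + σ_d δ ), i.e. |V(x,u,y,w) − V(x',u',y',w')| ≤ ( max(α, Aκ̄)|x−x'|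 + (B+Aσ_fδ)κ̄|u−u'| + max(γ, Cκ̄)|y−y'| + (D+Cσ_dδ)κ̄|w−w'| ) e^{max(|y|,|y'|) + (b+σ_dδ)·max(|w|,|w'|)}. -/

import Mathlib

open MeasureTheory Real

private lemma abs_int_le_int_abs {Ω : Type*} [MeasurableSpace Ω] (μ : Measure Ω) (f : Ω → ℝ) :
    |∫ ω, f ω ∂μ| ≤ ∫ ω, |f ω| ∂μ := by
  simpa [Real.norm_eq_abs] using norm_integral_le_integral_norm (μ := μ) f

/-- **One-step backward induction: the Backward Dynamic Programming operator
`v ↦ max(h, Pv)` preserves the local Lipschitz property.**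
If `v` satisfies the local Lipschitz property with parameters `(A,B,C,D,b)`,
`Pv(x,u,y,w) = E[v(x + σ_f δ u + G¹, u + G², y − σ_d δ w + G³, w + G⁴)]` and
`|h(x,y) − h(x',y')| ≤ e^{max(|y|,|y'|)}(α|x−x'| + γ|y−y'|)`, then
`V(x,u,y,w) = max(h(x,y), Pv(x,u,y,w))` satisfies the local Lipschitz property with
parameters `(max(α, Aκ̄), (B+Aσ_fδ)κ̄, max(γ, Cκ̄), (D+Cσ_dδ)κ̄, b+σ_dδ)`,
where `κ̄ = E[exp(|G³| + b|G⁴|)]`. -/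
theorem bdp_operator_preserves_local_lipschitz
    {Ω : Type*} [MeasurableSpace Ω] (ℙ : Measure Ω) [IsProbabilityMeasure ℙ]
    (G1 G2 G3 G4 : Ω → ℝ)
    (hG1 : Measurable G1) (hG2 : Measurable G2) (hG3 : Measurable G3) (hG4 : Measurable G4)
    (b σf σd δ : ℝ) (hb : 0 ≤ b) (hσf : 0 ≤ σf) (hσd : 0 ≤ σd) (hδ : 0 ≤ δ)
    (hκ : Integrable (fun ω => exp (|G3 ω| + b * |G4 ω|)) ℙ)
    (hκ' : Integrable
      (fun ω => (1 + |G1 ω| + |G2 ω| + |G3 ω| + |G4 ω|) * exp (|G3 ω| + b * |G4 ω|)) ℙ)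
    (v : ℝ → ℝ → ℝ → ℝ → ℝ)
    (hvmeas : Measurable fun z : ℝ × ℝ × ℝ × ℝ => v z.1 z.2.1 z.2.2.1 z.2.2.2)
    (A B C D : ℝ) (hA : 0 ≤ A) (hB : 0 ≤ B) (hC : 0 ≤ C) (hD : 0 ≤ D)
    (hv : ∀ x x' u u' y y' w w' : ℝ,
      |v x u y w - v x' u' y' w'| ≤
        (A * |x - x'| + B * |u - u'| + C * |y - y'| + D * |w - w'|) *
          exp (max |y| |y'| + b * max |w| |w'|))
    (hint : ∀ x u y w : ℝ, Integrable
      (fun ω => v (x + σf * δ * u + G1 ω) (u + G2 ω) (y - σd * δ * w + G3 ω) (w + G4 ω)) ℙ)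
    (h : ℝ → ℝ → ℝ) (α γ : ℝ) (hα : 0 ≤ α) (hγ : 0 ≤ γ)
    (hh : ∀ x x' y y' : ℝ,
      |h x y - h x' y'| ≤ exp (max |y| |y'|) * (α * |x - x'| + γ * |y - y'|)) :
    ∀ x x' u u' y y' w w' : ℝ,
      |max (h x y)
          (∫ ω, v (x + σf * δ * u + G1 ω) (u + G2 ω) (y - σd * δ * w + G3 ω) (w + G4 ω) ∂ℙ) -
        max (h x' y')
          (∫ ω, v (x' + σf * δ * u' + G1 ω) (u' + G2 ω) (y' - σd * δ * w' + G3 ω)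
            (w' + G4 ω) ∂ℙ)|
        ≤ (max α (A * (∫ ω, exp (|G3 ω| + b * |G4 ω|) ∂ℙ)) * |x - x'| +
            ((B + A * σf * δ) * (∫ ω, exp (|G3 ω| + b * |G4 ω|) ∂ℙ)) * |u - u'| +
            max γ (C * (∫ ω, exp (|G3 ω| + b * |G4 ω|) ∂ℙ)) * |y - y'| +
            ((D + C * σd * δ) * (∫ ω, exp (|G3 ω| + b * |G4 ω|) ∂ℙ)) * |w - w'|) *
          exp (max |y| |y'| + (b + σd * δ) * max |w| |w'|) := by
  intro x x' u u' y y' w w'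
  set κ := ∫ ω, exp (|G3 ω| + b * |G4 ω|) ∂ℙ with hκdef
  have hκ0 : 0 ≤ κ := integral_nonneg fun ω => (exp_pos _).le
  set M := max |y| |y'| + (b + σd * δ) * max |w| |w'| with hMdef
  have hMge : max |y| |y'| ≤ M := by
    have h1 : 0 ≤ (b + σd * δ) * max |w| |w'| :=
      mul_nonneg (by positivity) (le_max_of_le_left (abs_nonneg _))
    simp only [hMdef]; linarith
  set K := A * |x - x'| + (A * (σf * δ) + B) * |u - u'| + C * |y - y'| +
    (C * (σd * δ) + D) * |w - w'| with hKdef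
  have hK0 : 0 ≤ K := by positivity
  have key : ∀ ω, |v (x + σf * δ * u + G1 ω) (u + G2 ω) (y - σd * δ * w + G3 ω) (w + G4 ω)
      - v (x' + σf * δ * u' + G1 ω) (u' + G2 ω) (y' - σd * δ * w' + G3 ω) (w' + G4 ω)|
      ≤ K * exp M * exp (|G3 ω| + b * |G4 ω|) := by
    intro ω
    refine (hv _ _ _ _ _ _ _ _).trans ?_
    have e1 : |(x + σf * δ * u + G1 ω) - (x' + σf * δ * u' + G1 ω)|
        ≤ |x - x'| + σf * δ * |u - u'| := by
      have heq : (x + σf * δ * u + G1 ω) - (x' + σf * δ * u' + G1 ω)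
          = (x - x') + σf * δ * (u - u') := by ring
      rw [heq]
      refine (abs_add_le _ _).trans ?_
      rw [abs_mul, abs_of_nonneg (by positivity : (0:ℝ) ≤ σf * δ)]
    have e2 : |(u + G2 ω) - (u' + G2 ω)| ≤ |u - u'| := by
      have heq : (u + G2 ω) - (u' + G2 ω) = u - u' := by ring
      rw [heq]
    have e3 : |(y - σd * δ * w + G3 ω) - (y' - σd * δ * w' + G3 ω)|
        ≤ |y - y'| + σd * δ * |w - w'| := by
      have heq : (y - σd * δ * w + G3 ω) - (y' - σd * δ * w' + G3 ω)
          = (y - y') + σd * δ * (w' - w) := by ring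
      rw [heq]
      refine (abs_add_le _ _).trans ?_
      rw [abs_mul, abs_of_nonneg (by positivity : (0:ℝ) ≤ σd * δ), abs_sub_comm w' w]
    have e4 : |(w + G4 ω) - (w' + G4 ω)| ≤ |w - w'| := by
      have heq : (w + G4 ω) - (w' + G4 ω) = w - w' := by ring
      rw [heq]
    have f1 : A * |(x + σf * δ * u + G1 ω) - (x' + σf * δ * u' + G1 ω)|
        + B * |(u + G2 ω) - (u' + G2 ω)|
        + C * |(y - σd * δ * w + G3 ω) - (y' - σd * δ * w' + G3 ω)|
        + D * |(w + G4 ω) - (w' + G4 ω)| ≤ K := by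
      have := mul_le_mul_of_nonneg_left e1 hA
      have := mul_le_mul_of_nonneg_left e2 hB
      have := mul_le_mul_of_nonneg_left e3 hC
      have := mul_le_mul_of_nonneg_left e4 hD
      simp only [hKdef]; nlinarith
    have f2 : exp (max |y - σd * δ * w + G3 ω| |y' - σd * δ * w' + G3 ω|
        + b * max |w + G4 ω| |w' + G4 ω|)
        ≤ exp M * exp (|G3 ω| + b * |G4 ω|) := by
      rw [← Real.exp_add]
      apply Real.exp_le_exp.mpr
      have g1 : max |y - σd * δ * w + G3 ω| |y' - σd * δ * w' + G3 ω|
          ≤ max |y| |y'| + σd * δ * max |w| |w'| + |G3 ω| := by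
        apply max_le
        · calc |y - σd * δ * w + G3 ω| ≤ |y - σd * δ * w| + |G3 ω| := abs_add_le _ _
            _ ≤ (|y| + |σd * δ * w|) + |G3 ω| := by linarith [abs_sub (y) (σd * δ * w)]
            _ ≤ max |y| |y'| + σd * δ * max |w| |w'| + |G3 ω| := by
                rw [abs_mul, abs_mul, abs_of_nonneg hσd, abs_of_nonneg hδ]
                have h1 : |y| ≤ max |y| |y'| := le_max_left _ _
                have h2 : σd * δ * |w| ≤ σd * δ * max |w| |w'| :=
                  mul_le_mul_of_nonneg_left (le_max_left _ _) (by positivity)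
                nlinarith
        · calc |y' - σd * δ * w' + G3 ω| ≤ |y' - σd * δ * w'| + |G3 ω| := abs_add_le _ _
            _ ≤ (|y'| + |σd * δ * w'|) + |G3 ω| := by linarith [abs_sub (y') (σd * δ * w')]
            _ ≤ max |y| |y'| + σd * δ * max |w| |w'| + |G3 ω| := by
                rw [abs_mul, abs_mul, abs_of_nonneg hσd, abs_of_nonneg hδ]
                have h1 : |y'| ≤ max |y| |y'| := le_max_right _ _
                have h2 : σd * δ * |w'| ≤ σd * δ * max |w| |w'| :=
                  mul_le_mul_of_nonneg_left (le_max_right _ _) (by positivity)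
                nlinarith
      have g2 : max |w + G4 ω| |w' + G4 ω| ≤ max |w| |w'| + |G4 ω| := by
        apply max_le
        · exact (abs_add_le _ _).trans (add_le_add_left (le_max_left _ _) _)
        · exact (abs_add_le _ _).trans (add_le_add_left (le_max_right _ _) _)
      have g3 : b * max |w + G4 ω| |w' + G4 ω| ≤ b * (max |w| |w'| + |G4 ω|) :=
        mul_le_mul_of_nonneg_left g2 hb
      have hMeq : M = max |y| |y'| + σd * δ * max |w| |w'| + b * max |w| |w'| := by
        simp only [hMdef]; ring
      have g4 : b * (max |w| |w'| + |G4 ω|) = b * max |w| |w'| + b * |G4 ω| := by ring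
      rw [hMeq]; linarith
    calc (A * |(x + σf * δ * u + G1 ω) - (x' + σf * δ * u' + G1 ω)|
          + B * |(u + G2 ω) - (u' + G2 ω)|
          + C * |(y - σd * δ * w + G3 ω) - (y' - σd * δ * w' + G3 ω)|
          + D * |(w + G4 ω) - (w' + G4 ω)|)
          * exp (max |y - σd * δ * w + G3 ω| |y' - σd * δ * w' + G3 ω|
            + b * max |w + G4 ω| |w' + G4 ω|)
        ≤ K * (exp M * exp (|G3 ω| + b * |G4 ω|)) := by
          apply mul_le_mul f1 f2 (exp_pos _).le hK0
      _ = K * exp M * exp (|G3 ω| + b * |G4 ω|) := by ring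
  -- bound on the integral difference
  have hIdiff : |(∫ ω, v (x + σf * δ * u + G1 ω) (u + G2 ω) (y - σd * δ * w + G3 ω)
        (w + G4 ω) ∂ℙ)
      - ∫ ω, v (x' + σf * δ * u' + G1 ω) (u' + G2 ω) (y' - σd * δ * w' + G3 ω)
        (w' + G4 ω) ∂ℙ| ≤ K * exp M * κ := by
    rw [← integral_sub (hint x u y w) (hint x' u' y' w')]
    calc |∫ ω, (v (x + σf * δ * u + G1 ω) (u + G2 ω) (y - σd * δ * w + G3 ω) (w + G4 ω)
          - v (x' + σf * δ * u' + G1 ω) (u' + G2 ω) (y' - σd * δ * w' + G3 ω) (w' + G4 ω)) ∂ℙ|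
        ≤ ∫ ω, |v (x + σf * δ * u + G1 ω) (u + G2 ω) (y - σd * δ * w + G3 ω) (w + G4 ω)
          - v (x' + σf * δ * u' + G1 ω) (u' + G2 ω) (y' - σd * δ * w' + G3 ω) (w' + G4 ω)| ∂ℙ :=
          abs_int_le_int_abs ℙ _
      _ ≤ ∫ ω, K * exp M * exp (|G3 ω| + b * |G4 ω|) ∂ℙ := by
          refine integral_mono ((hint x u y w).sub (hint x' u' y' w')).abs
            (hκ.const_mul (K * exp M)) key
      _ = K * exp M * κ := by rw [integral_const_mul]
  -- bound for h
  have hhb : |h x y - h x' y'|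
      ≤ (max α (A * κ) * |x - x'| + (B + A * σf * δ) * κ * |u - u'|
        + max γ (C * κ) * |y - y'| + (D + C * σd * δ) * κ * |w - w'|) * exp M := by
    refine (hh x x' y y').trans ?_
    have s1 : exp (max |y| |y'|) ≤ exp M := Real.exp_le_exp.mpr hMge
    have s2 : α * |x - x'| + γ * |y - y'|
        ≤ max α (A * κ) * |x - x'| + (B + A * σf * δ) * κ * |u - u'|
          + max γ (C * κ) * |y - y'| + (D + C * σd * δ) * κ * |w - w'| := by
      have t1 : α * |x - x'| ≤ max α (A * κ) * |x - x'| :=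
        mul_le_mul_of_nonneg_right (le_max_left _ _) (abs_nonneg _)
      have t2 : γ * |y - y'| ≤ max γ (C * κ) * |y - y'| :=
        mul_le_mul_of_nonneg_right (le_max_left _ _) (abs_nonneg _)
      have t3 : 0 ≤ (B + A * σf * δ) * κ * |u - u'| := by positivity
      have t4 : 0 ≤ (D + C * σd * δ) * κ * |w - w'| := by positivity
      linarith
    have s3 : 0 ≤ α * |x - x'| + γ * |y - y'| := by positivity
    calc exp (max |y| |y'|) * (α * |x - x'| + γ * |y - y'|)
        ≤ exp M * (α * |x - x'| + γ * |y - y'|) := mul_le_mul_of_nonneg_right s1 s3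
      _ ≤ exp M * (max α (A * κ) * |x - x'| + (B + A * σf * δ) * κ * |u - u'|
          + max γ (C * κ) * |y - y'| + (D + C * σd * δ) * κ * |w - w'|) :=
          mul_le_mul_of_nonneg_left s2 (exp_pos _).le
      _ = _ := mul_comm _ _
  -- bound for Pv side
  have hPb : K * exp M * κ
      ≤ (max α (A * κ) * |x - x'| + (B + A * σf * δ) * κ * |u - u'|
        + max γ (C * κ) * |y - y'| + (D + C * σd * δ) * κ * |w - w'|) * exp M := by
    have t1 : (A * κ) * |x - x'| ≤ max α (A * κ) * |x - x'| :=
      mul_le_mul_of_nonneg_right (le_max_right _ _) (abs_nonneg _)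
    have t2 : (C * κ) * |y - y'| ≤ max γ (C * κ) * |y - y'| :=
      mul_le_mul_of_nonneg_right (le_max_right _ _) (abs_nonneg _)
    have hKκ : K * κ ≤ max α (A * κ) * |x - x'| + (B + A * σf * δ) * κ * |u - u'|
        + max γ (C * κ) * |y - y'| + (D + C * σd * δ) * κ * |w - w'| := by
      have hexp : K * κ = (A * κ) * |x - x'| + (B + A * σf * δ) * κ * |u - u'|
          + (C * κ) * |y - y'| + (D + C * σd * δ) * κ * |w - w'| := by
        simp only [hKdef]; ring
      linarith
    calc K * exp M * κ = K * κ * exp M := by ring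
      _ ≤ _ := mul_le_mul_of_nonneg_right hKκ (exp_pos _).le
  exact (abs_max_sub_max_le_max _ _ _ _).trans (max_le hhb (hIdiff.trans hPb))
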